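/- arXiv:2408.04059 — 2 statements merged into one kernel-verified Lean document; each statement's English description precedes it below -/
import Mathlib

section
/- The subgroup N_S of Aut(F_k(G)) generated by {φ_{S,α} : α ⊆ T_S} is isomorphic to Z_2^{|T_S|}. -/
open scoped Classical symmDiff

variable {V : Type*}

/-- The `k`-token graph of `G`: vertices are the `k`-subsets of `V(G)`,
two being adjacent iff their symmetric difference is an edge of `G`. -/
def tokenGraph [DecidableEq V] (G : SimpleGraph V) (k : ℕ) :
    SimpleGraph {A : Finset V // A.card = k} where
  Adj A B := ∃ a b : V, G.Adj a b ∧ (A.1 ∆ B.1) = {a, b}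
  symm := by
    constructor
    rintro A B ⟨a, b, hab, h⟩
    exact ⟨a, b, hab, by rwa [symmDiff_comm]⟩
  loopless := by
    constructor
    rintro A ⟨a, b, hab, h⟩
    rw [symmDiff_self] at h
    exact (Finset.insert_ne_empty a {b}) h.symm

/-- `S` is a 2-cut with the same neighbours: a 2-element vertex set whose removal
disconnects `G` and whose two vertices have the same neighbours outside `S`. -/
def SameNbrCut (G : SimpleGraph V) (S : Finset V) : Prop :=
  S.card = 2 ∧ ¬ (G.induce ((↑S : Set V)ᶜ)).Preconnected ∧
    ∀ x ∈ S, ∀ y ∈ S, ∀ v ∉ S, (G.Adj x v ↔ G.Adj y v)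

/-- `A^S = (A \ S) ∪ (S \ A)`. -/
def tokenMove [DecidableEq V] (A S : Finset V) : Finset V := (A \ S) ∪ (S \ A)

/-- The connected components of `G \ S`. -/
abbrev delComp (G : SimpleGraph V) (S : Finset V) :=
  (G.induce ((↑S : Set V)ᶜ)).ConnectedComponent

/-- The distribution tuple of `A` over the components of `G \ S`. -/
noncomputable def compDist (G : SimpleGraph V) (S : Finset V) (A : Finset V)
    (c : delComp G S) : ℕ :=
  {v : ((↑S : Set V)ᶜ : Set V) | (v : V) ∈ A ∧
    (G.induce ((↑S : Set V)ᶜ)).connectedComponentMk v = c}.ncard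

/-- `T_S`: distribution tuples with `kᵢ ≤ nᵢ` summing to `k - 1`. -/
def TS (G : SimpleGraph V) (S : Finset V) (k : ℕ) : Set (delComp G S → ℕ) :=
  {t | (∀ c, t c ≤ c.supp.ncard) ∧ ∑ᶠ c, t c = k - 1}

/-- The map `φ_{S,α}` on `k`-subsets. -/
noncomputable def phiFun [DecidableEq V] (G : SimpleGraph V) (S : Finset V)
    (α : Set (delComp G S → ℕ)) (A : Finset V) : Finset V :=
  if compDist G S A ∈ α then tokenMove A S else A

/-- The map `ψ_β`, the composition of the `φ_{Sᵢ,βᵢ}`. -/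
noncomputable def psiFun [DecidableEq V] (G : SimpleGraph V) {q : ℕ}
    (S : Fin q → Finset V) (β : ∀ i, Set (delComp G (S i) → ℕ)) :
    Finset V → Finset V :=
  (List.ofFn (fun i => phiFun G (S i) (β i))).foldr (· ∘ ·) id
set_option linter.unusedSectionVars false
section Aux
variable [Fintype V] [DecidableEq V] {G : SimpleGraph V} {S : Finset V} {k : ℕ}

private lemma tokenMove_eq_symmDiff (A : Finset V) : tokenMove A S = A ∆ S := by
  rw [symmDiff_def, Finset.sup_eq_union]; rfl

private lemma tokenMove_tokenMove (A : Finset V) : tokenMove (tokenMove A S) S = A := by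
  simp [tokenMove_eq_symmDiff, symmDiff_symmDiff_cancel_right]

private lemma tokenMove_ne (hS : S.card = 2) (A : Finset V) : tokenMove A S ≠ A := by
  rw [tokenMove_eq_symmDiff]
  intro h
  have : S = ⊥ := symmDiff_eq_left.mp h
  simp [this, Finset.bot_eq_empty] at hS

private lemma compDist_tokenMove (A : Finset V) :
    compDist G S (tokenMove A S) = compDist G S A := by
  funext c
  unfold compDist
  congr 1
  ext v
  have hv : (v : V) ∉ S := v.2
  simp only [Set.mem_setOf_eq, tokenMove, Finset.mem_union, Finset.mem_sdiff]
  tauto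

private lemma card_sdiff_eq_finsum (A : Finset V) :
    (A \ S).card = ∑ᶠ c, compDist G S A c := by
  letI : Fintype (delComp G S) := Fintype.ofFinite _
  rw [finsum_eq_sum_of_fintype]
  have hcd : ∀ c : delComp G S, compDist G S A c =
      ((Finset.univ.filter (fun v : ((↑S : Set V)ᶜ : Set V) => (v : V) ∈ A)).filter
        (fun v => (G.induce ((↑S : Set V)ᶜ)).connectedComponentMk v = c)).card := by
    intro c
    rw [compDist, Set.ncard_eq_toFinset_card']
    congr 1
    ext v
    simp [Finset.filter_filter]
  simp_rw [hcd]
  have key : (Finset.univ.filter (fun v : ((↑S : Set V)ᶜ : Set V) => (v : V) ∈ A)).card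
      = ∑ c : delComp G S, ((Finset.univ.filter
          (fun v : ((↑S : Set V)ᶜ : Set V) => (v : V) ∈ A)).filter
        (fun v => (G.induce ((↑S : Set V)ᶜ)).connectedComponentMk v = c)).card :=
    Finset.card_eq_sum_card_fiberwise (fun v _ => Finset.mem_univ _)
  refine Eq.trans ?_ key
  refine Finset.card_bij (fun w hw => (⟨w, (Finset.mem_sdiff.mp hw).2⟩ :
      ((↑S : Set V)ᶜ : Set V))) ?_ ?_ ?_
  · intro w hw
    simp [Finset.mem_filter, (Finset.mem_sdiff.mp hw).1]
  · intro a ha b hb h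
    exact congrArg Subtype.val h
  · intro v hv
    simp only [Finset.mem_filter, Finset.mem_univ, true_and] at hv
    have hvS : (v : V) ∉ S := v.2
    exact ⟨(v : V), Finset.mem_sdiff.mpr ⟨hv, hvS⟩, rfl⟩

end Aux
section Aux2
variable [Fintype V] [DecidableEq V] {G : SimpleGraph V} {S : Finset V} {k : ℕ}

private lemma card_tokenMove (hS2 : S.card = 2) (hk : 1 ≤ k) {A : Finset V}
    (hA : A.card = k) (h : compDist G S A ∈ TS G S k) :
    (tokenMove A S).card = k := by
  have h1 : (A \ S).card = k - 1 := by rw [card_sdiff_eq_finsum]; exact h.2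
  have h2 := Finset.card_sdiff_add_card_inter A S
  have h3 := Finset.card_sdiff_add_card_inter S A
  have hIC : (S ∩ A).card = (A ∩ S).card := by rw [Finset.inter_comm]
  have h4 : (tokenMove A S).card = (A \ S).card + (S \ A).card :=
    Finset.card_union_of_disjoint disjoint_sdiff_sdiff
  omega

private lemma compDist_phiFun (α : Set (delComp G S → ℕ)) (A : Finset V) :
    compDist G S (phiFun G S α A) = compDist G S A := by
  unfold phiFun; split <;> simp [compDist_tokenMove]

private lemma phiFun_phiFun (α β : Set (delComp G S → ℕ)) (A : Finset V) :
    phiFun G S α (phiFun G S β A) = phiFun G S (α ∆ β) A := by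
  by_cases hβ : compDist G S A ∈ β <;> by_cases hα : compDist G S A ∈ α <;>
    simp [phiFun, hβ, hα, compDist_tokenMove, tokenMove_tokenMove, Set.mem_symmDiff]

private lemma card_phiFun (hS2 : S.card = 2) (hk : 1 ≤ k) {α : Set (delComp G S → ℕ)}
    (hα : α ⊆ TS G S k) {A : Finset V} (hA : A.card = k) :
    (phiFun G S α A).card = k := by
  unfold phiFun
  split
  · exact card_tokenMove hS2 hk hA (hα (by assumption))
  · exact hA

private lemma phiFun_empty (A : Finset V) : phiFun G S (∅ : Set (delComp G S → ℕ)) A = A := by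
  simp [phiFun]

/-- The permutation `φ_{S,α}` on the vertices of the token graph. -/
private noncomputable def phiPerm (G : SimpleGraph V) (S : Finset V) (k : ℕ)
    (hS2 : S.card = 2) (hk : 1 ≤ k) (α : Set (delComp G S → ℕ)) (hα : α ⊆ TS G S k) :
    Equiv.Perm {A : Finset V // A.card = k} :=
  Function.Involutive.toPerm
    (fun A => ⟨phiFun G S α A.1, card_phiFun hS2 hk hα A.2⟩)
    (fun A => Subtype.ext (by
      show phiFun G S α (phiFun G S α A.1) = A.1
      rw [phiFun_phiFun, symmDiff_self]
      exact phiFun_empty A.1))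

private lemma phiPerm_apply (G : SimpleGraph V) (S : Finset V) (k : ℕ)
    (hS2 : S.card = 2) (hk : 1 ≤ k) (α : Set (delComp G S → ℕ)) (hα : α ⊆ TS G S k)
    (A : {A : Finset V // A.card = k}) :
    (phiPerm G S k hS2 hk α hα A : Finset V) = phiFun G S α A.1 := rfl

end Aux2
section Aux3
variable [Fintype V] [DecidableEq V] {G : SimpleGraph V} {S : Finset V} {k : ℕ}

private lemma exists_witness (hS2 : S.card = 2) (hk : 1 ≤ k)
    {t : delComp G S → ℕ} (ht : t ∈ TS G S k) :
    ∃ A : Finset V, A.card = k ∧ compDist G S A = t := by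
  letI : Fintype (delComp G S) := Fintype.ofFinite _
  have hb : ∀ c : delComp G S, ∃ B : Finset (((↑S : Set V)ᶜ : Set V)),
      B ⊆ c.supp.toFinset ∧ B.card = t c := by
    intro c
    refine Finset.exists_subset_card_eq ?_
    rw [← Set.ncard_eq_toFinset_card']
    exact ht.1 c
  choose B hB1 hB2 using hb
  set mk := (G.induce ((↑S : Set V)ᶜ)).connectedComponentMk with hmk
  have hmem : ∀ (c : delComp G S) (v : ((↑S : Set V)ᶜ : Set V)), v ∈ B c → mk v = c := by
    intro c v hv
    have := hB1 c hv
    rw [Set.mem_toFinset] at this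
    exact this
  set U : Finset (((↑S : Set V)ᶜ : Set V)) :=
    Finset.univ.filter (fun v => v ∈ B (mk v)) with hU
  have fib : ∀ c : delComp G S, U.filter (fun v => mk v = c) = B c := by
    intro c
    ext v
    simp only [hU, Finset.mem_filter, Finset.mem_univ, true_and]
    constructor
    · rintro ⟨h1, h2⟩; rwa [h2] at h1
    · intro h
      have := hmem c v h
      exact ⟨by rwa [this], this⟩
  have hUcard : U.card = k - 1 := by
    rw [Finset.card_eq_sum_card_fiberwise (f := mk) (t := Finset.univ)
      (fun v _ => Finset.mem_univ _)]
    have : ∀ c : delComp G S, (U.filter (fun v => mk v = c)).card = t c := by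
      intro c; rw [fib c, hB2 c]
    rw [Finset.sum_congr rfl (fun c _ => this c)]
    have := ht.2
    rwa [finsum_eq_sum_of_fintype] at this
  obtain ⟨s0, hs0⟩ := Finset.card_pos.mp (by omega : 0 < S.card)
  have himg : s0 ∉ U.image Subtype.val := by
    intro h
    obtain ⟨v, _, hv⟩ := Finset.mem_image.mp h
    exact v.2 (by rw [hv]; exact hs0)
  refine ⟨insert s0 (U.image Subtype.val), ?_, ?_⟩
  · rw [Finset.card_insert_of_notMem himg,
      Finset.card_image_of_injective _ Subtype.val_injective, hUcard]
    omega
  · funext c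
    have hset : {v : ((↑S : Set V)ᶜ : Set V) |
        (v : V) ∈ insert s0 (U.image Subtype.val) ∧ mk v = c} = ↑(B c) := by
      ext v
      simp only [Set.mem_setOf_eq, Finset.mem_insert, Finset.mem_image, Finset.coe_mem,
        Finset.mem_coe]
      constructor
      · rintro ⟨h1, h2⟩
        rcases h1 with h1 | h1
        · exact absurd (h1 ▸ hs0) v.2
        · obtain ⟨u, hu, huv⟩ := h1
          have huv' : u = v := Subtype.ext huv
          have : v ∈ U.filter (fun v => mk v = c) :=
            Finset.mem_filter.mpr ⟨huv' ▸ hu, h2⟩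
          rwa [fib c] at this
      · intro h
        have hvU : v ∈ U.filter (fun v => mk v = c) := by rw [fib c]; exact h
        obtain ⟨h1, h2⟩ := Finset.mem_filter.mp hvU
        exact ⟨Or.inr ⟨v, h1, rfl⟩, h2⟩
    show ({v : ((↑S : Set V)ᶜ : Set V) |
        (v : V) ∈ insert s0 (U.image Subtype.val) ∧ mk v = c}).ncard = t c
    rw [hset, Set.ncard_coe_finset, hB2 c]

end Aux3
private lemma zmod2_mul_iff (a b : Multiplicative (ZMod 2)) :
    a * b = Multiplicative.ofAdd 1 ↔
      ((a = Multiplicative.ofAdd 1 ∧ ¬ b = Multiplicative.ofAdd 1) ∨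
       (b = Multiplicative.ofAdd 1 ∧ ¬ a = Multiplicative.ofAdd 1)) := by
  revert a b; decide

private lemma zmod2_eq_one (a : Multiplicative (ZMod 2))
    (h : ¬ a = Multiplicative.ofAdd 1) : a = 1 := by revert a; decide

private lemma zmod2_one_ne : (1 : Multiplicative (ZMod 2)) ≠ Multiplicative.ofAdd 1 := by
  decide

private lemma zmod2_eq_ofAdd (a : Multiplicative (ZMod 2)) (h : ¬ a = 1) :
    a = Multiplicative.ofAdd 1 := by revert a; decide
/-- `N_S = ⟨{φ_{S,α} : α ⊆ T_S}⟩ ≅ ℤ₂^{|T_S|}`. -/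
theorem NS_iso_Z2_pow [Fintype V] [DecidableEq V] (G : SimpleGraph V)
    (hG : G.Connected) (S : Finset V) (hS : SameNbrCut G S) (k : ℕ)
    (hk1 : 1 ≤ k) (hk2 : k ≤ Fintype.card V - 1) :
    Nonempty
      ((Subgroup.closure {e : Equiv.Perm {A : Finset V // A.card = k} |
          ∃ α ⊆ TS G S k, ∀ A : {A : Finset V // A.card = k},
            ((e A : {B : Finset V // B.card = k}) : Finset V) = phiFun G S α (↑A : Finset V)})
        ≃* ((TS G S k) → Multiplicative (ZMod 2))) := by
  classical
  have hS2 : S.card = 2 := hS.1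
  set αOf : ((TS G S k) → Multiplicative (ZMod 2)) → Set (delComp G S → ℕ) :=
    fun f => {t | ∃ h : t ∈ TS G S k, f ⟨t, h⟩ = Multiplicative.ofAdd 1} with hαOfdef
  have hαOf : ∀ f, αOf f ⊆ TS G S k := fun f t ht => ht.1
  set Φ : ((TS G S k) → Multiplicative (ZMod 2)) →*
      Equiv.Perm {A : Finset V // A.card = k} :=
    MonoidHom.mk' (fun f => phiPerm G S k hS2 hk1 (αOf f) (hαOf f)) (by
      intro f g
      refine Equiv.ext fun A => Subtype.ext ?_
      show phiFun G S (αOf (f * g)) A.1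
        = (phiPerm G S k hS2 hk1 (αOf f) (hαOf f)
            (phiPerm G S k hS2 hk1 (αOf g) (hαOf g) A) : Finset V)
      rw [phiPerm_apply, phiPerm_apply, phiFun_phiFun]
      congr 1
      ext t
      by_cases ht : t ∈ TS G S k
      · simp only [hαOfdef, Set.mem_setOf_eq, Set.mem_symmDiff, exists_prop,
          ht, true_and, exists_true_left]
        show (f * g) ⟨t, ht⟩ = Multiplicative.ofAdd 1 ↔ _
        rw [Pi.mul_apply, zmod2_mul_iff]
      · constructor
        · rintro ⟨h, -⟩; exact absurd h ht
        · rintro (⟨⟨h, -⟩, -⟩ | ⟨⟨h, -⟩, -⟩) <;> exact absurd h ht) with hΦdef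
  have hinj : Function.Injective Φ := by
    rw [injective_iff_map_eq_one]
    intro f hf
    funext t
    obtain ⟨t, ht⟩ := t
    by_contra hne
    have hft : f ⟨t, ht⟩ = Multiplicative.ofAdd 1 := zmod2_eq_ofAdd _ hne
    obtain ⟨A, hA, hAd⟩ := exists_witness hS2 hk1 ht
    have hmem : compDist G S A ∈ αOf f := ⟨hAd ▸ ht, by
      convert hft using 2 <;> simp [hAd]⟩
    have := congrArg (fun e : Equiv.Perm {A : Finset V // A.card = k} =>
      ((e ⟨A, hA⟩ : {B : Finset V // B.card = k}) : Finset V)) hf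
    simp only [Equiv.Perm.one_apply] at this
    rw [hΦdef] at this
    have hL : ((Φ f ⟨A, hA⟩ : {B : Finset V // B.card = k}) : Finset V)
        = phiFun G S (αOf f) A := rfl
    rw [hΦdef] at hL
    rw [hL] at this
    rw [phiFun, if_pos hmem] at this
    exact tokenMove_ne hS2 A this
  have hrange : Φ.range = Subgroup.closure
      {e : Equiv.Perm {A : Finset V // A.card = k} |
        ∃ α ⊆ TS G S k, ∀ A : {A : Finset V // A.card = k},
          ((e A : {B : Finset V // B.card = k}) : Finset V) = phiFun G S α (↑A : Finset V)} := by
    apply le_antisymm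
    · rintro e ⟨f, rfl⟩
      apply Subgroup.subset_closure
      exact ⟨αOf f, hαOf f, fun A => rfl⟩
    · rw [Subgroup.closure_le]
      rintro e ⟨α, hα, he⟩
      refine ⟨fun t => if (t : delComp G S → ℕ) ∈ α then Multiplicative.ofAdd 1 else 1, ?_⟩
      have hαf : αOf (fun t => if (t : delComp G S → ℕ) ∈ α
          then Multiplicative.ofAdd 1 else 1) = α := by
        ext t
        constructor
        · rintro ⟨h, heq⟩
          by_cases htα : t ∈ α
          · exact htα
          · have heq' : (if t ∈ α then (Multiplicative.ofAdd 1 : Multiplicative (ZMod 2))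
                else 1) = Multiplicative.ofAdd 1 := heq
            rw [if_neg htα] at heq'
            exact absurd heq' zmod2_one_ne
        · intro htα
          refine ⟨hα htα, ?_⟩
          show (if t ∈ α then (Multiplicative.ofAdd 1 : Multiplicative (ZMod 2)) else 1)
            = Multiplicative.ofAdd 1
          rw [if_pos htα]
      refine Equiv.ext fun A => Subtype.ext ?_
      show phiFun G S (αOf (fun t => if (t : delComp G S → ℕ) ∈ α
          then Multiplicative.ofAdd 1 else 1)) A.1
        = ((e A : {B : Finset V // B.card = k}) : Finset V)
      rw [hαf, he A]
  exact ⟨(MulEquiv.subgroupCongr hrange).symm.trans (MonoidHom.ofInjective hinj).symm⟩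
end

section
/- Let G be a connected graph with a 2-cut with the same neighbours S, and let α ⊆ T_S with α ≠ ∅ and α ≠ T_S. Then φ_{S,α} is not of the form ι(f) for any automorphism f of G. -/
open scoped Classical symmDiff

variable {V : Type*}

section Aux

variable [Fintype V] [DecidableEq V]

/-- `compDist` only depends on `A \ S`. -/
lemma compDist_congr (G : SimpleGraph V) (S : Finset V) (A B : Finset V)
    (h : ∀ v ∉ S, (v ∈ A ↔ v ∈ B)) : compDist G S A = compDist G S B := by
  funext c
  unfold compDist
  congr 1
  ext v
  have hv : (v : V) ∉ S := by
    have h2 := v.2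
    simp only [Set.mem_compl_iff, Finset.mem_coe] at h2
    exact h2
  exact and_congr_left fun _ => h v hv

/-- Every tuple in `T_S` is realized by a `(k-1)`-set disjoint from `S`. -/
lemma realize_TS (G : SimpleGraph V) (S : Finset V) (k : ℕ)
    (t : delComp G S → ℕ) (ht : t ∈ TS G S k) :
    ∃ C : Finset V, (∀ v ∈ C, v ∉ S) ∧ C.card = k - 1 ∧ compDist G S C = t := by
  haveI : Fintype (delComp G S) := inferInstance
  obtain ⟨ht1, ht2⟩ := ht
  have hD : ∀ c : delComp G S, ∃ D : Finset ((↑S : Set V)ᶜ : Set V),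
      (∀ v ∈ D, (G.induce ((↑S : Set V)ᶜ)).connectedComponentMk v = c) ∧
      D.card = t c := by
    intro c
    have h1 : t c ≤ c.supp.toFinset.card := by
      rw [← Set.ncard_eq_toFinset_card']
      exact ht1 c
    obtain ⟨D, hD1, hD2⟩ := Finset.exists_subset_card_eq h1
    refine ⟨D, fun v hv => ?_, hD2⟩
    have := hD1 hv
    rw [Set.mem_toFinset, SimpleGraph.ConnectedComponent.mem_supp_iff] at this
    exact this
  choose D hD1 hD2 using hD
  have hdisj : ∀ c ∈ (Finset.univ : Finset (delComp G S)), ∀ c' ∈ Finset.univ,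
      c ≠ c' → Disjoint (D c) (D c') := by
    intro c _ c' _ hcc'
    rw [Finset.disjoint_left]
    intro v hv hv'
    exact hcc' ((hD1 c v hv).symm.trans (hD1 c' v hv'))
  set Ds := Finset.univ.biUnion D with hDs
  have hmemDs : ∀ v, v ∈ Ds ↔ ∃ c, v ∈ D c := by
    intro v; simp [hDs]
  refine ⟨Ds.image Subtype.val, ?_, ?_, ?_⟩
  · intro v hv
    obtain ⟨w, _, rfl⟩ := Finset.mem_image.mp hv
    have h2 := w.2
    simp only [Set.mem_compl_iff, Finset.mem_coe] at h2
    exact h2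
  · rw [Finset.card_image_of_injective _ Subtype.val_injective,
      Finset.card_biUnion hdisj]
    simp only [hD2]
    rw [finsum_eq_sum_of_fintype] at ht2
    exact ht2
  · funext c
    unfold compDist
    have hset : {v : ((↑S : Set V)ᶜ : Set V) | (v : V) ∈ Ds.image Subtype.val ∧
        (G.induce ((↑S : Set V)ᶜ)).connectedComponentMk v = c} = ↑(D c) := by
      ext v
      simp only [Set.mem_setOf_eq, Finset.coe_sort_coe, Finset.mem_coe]
      constructor
      · rintro ⟨hv1, hv2⟩
        obtain ⟨w, hw, hwv⟩ := Finset.mem_image.mp hv1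
        have hwv' : w = v := Subtype.val_injective hwv
        subst hwv'
        obtain ⟨c', hc'⟩ := (hmemDs w).mp hw
        rwa [(hD1 c' w hc').symm.trans hv2] at hc'
      · intro hv
        exact ⟨Finset.mem_image_of_mem _ ((hmemDs v).mpr ⟨c, hv⟩), hD1 c v hv⟩
    rw [hset, Set.ncard_coe_finset, hD2]

lemma tokenMove_pair (S C : Finset V) (x y : V) (hxy : x ≠ y) (hSxy : S = {x, y})
    (hC : ∀ v ∈ C, v ∉ S) : tokenMove (C ∪ {x}) S = C ∪ {y} := by
  subst hSxy
  have hx : x ∉ C := fun h => hC x h (by simp)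
  have hy : y ∉ C := fun h => hC y h (by simp)
  ext v
  simp only [tokenMove, Finset.mem_union, Finset.mem_sdiff, Finset.mem_insert,
    Finset.mem_singleton]
  by_cases h1 : v = x <;> by_cases h2 : v = y <;> by_cases h3 : v ∈ C <;>
    simp_all <;> tauto

end Aux

/-- Proposition 1, second part: for `∅ ≠ α ≠ T_S`, `φ_{S,α}` is not
induced, i.e. it is not `ι(f)` for any automorphism `f` of `G`. -/
theorem phi_not_iota [Fintype V] [DecidableEq V] (G : SimpleGraph V)
    (hG : G.Connected) (S : Finset V) (hS : SameNbrCut G S) (k : ℕ)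
    (hk1 : 1 ≤ k) (hk2 : k ≤ Fintype.card V - 1)
    (α : Set (delComp G S → ℕ)) (hα : α ⊆ TS G S k)
    (hne : α ≠ ∅) (hnT : α ≠ TS G S k) :
    ¬ ∃ f : G ≃g G, ∀ A : Finset V, A.card = k →
        phiFun G S α A = Finset.image f A := by
  rintro ⟨f, hf⟩
  obtain ⟨x, y, hxy, hSxy⟩ := Finset.card_eq_two.mp hS.1
  have hxS : x ∈ S := by rw [hSxy]; simp
  have hyS : y ∈ S := by rw [hSxy]; simp
  obtain ⟨t, htα⟩ := Set.nonempty_iff_ne_empty.mpr hne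
  obtain ⟨t', ht'T, ht'α⟩ : ∃ t', t' ∈ TS G S k ∧ t' ∉ α := by
    by_contra h
    push_neg at h
    exact hnT (Set.Subset.antisymm hα h)
  obtain ⟨C, hC, hCcard, hCt⟩ := realize_TS G S k t (hα htα)
  obtain ⟨C', hC', hC'card, hC't⟩ := realize_TS G S k t' ht'T
  have hxC : x ∉ C := fun h => hC x h hxS
  have hyC : y ∉ C := fun h => hC y h hyS
  have hxC' : x ∉ C' := fun h => hC' x h hxS
  have hyC' : y ∉ C' := fun h => hC' y h hyS
  have hfinj : Function.Injective (f : V → V) := f.toEquiv.injective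
  -- cardinalities
  have hcard : ∀ (D : Finset V) (z : V), z ∉ D → D.card = k - 1 → (D ∪ {z}).card = k := by
    intro D z hz hD
    rw [Finset.card_union_of_disjoint (Finset.disjoint_singleton_right.mpr hz),
      hD, Finset.card_singleton]
    omega
  have hAx : (C ∪ {x}).card = k := hcard C x hxC hCcard
  have hAy : (C ∪ {y}).card = k := hcard C y hyC hCcard
  have hBx : (C' ∪ {x}).card = k := hcard C' x hxC' hC'card
  -- compDist of the unions
  have hdist : ∀ (D : Finset V) (z : V), z ∈ S → compDist G S (D ∪ {z}) = compDist G S D := by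
    intro D z hz
    refine compDist_congr G S _ _ fun v hv => ?_
    simp only [Finset.mem_union, Finset.mem_singleton]
    constructor
    · rintro (h | rfl)
      · exact h
      · exact absurd hz hv
    · exact Or.inl
  have hdAx : compDist G S (C ∪ {x}) = t := (hdist C x hxS).trans hCt
  have hdAy : compDist G S (C ∪ {y}) = t := (hdist C y hyS).trans hCt
  have hdBx : compDist G S (C' ∪ {x}) = t' := (hdist C' x hxS).trans hC't
  -- images under f
  have himg1 : Finset.image f (C ∪ {x}) = C ∪ {y} := by
    have := (hf (C ∪ {x}) hAx).symm
    rwa [phiFun, if_pos (by rw [hdAx]; exact htα),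
      tokenMove_pair S C x y hxy hSxy hC] at this
  have himg2 : Finset.image f (C ∪ {y}) = C ∪ {x} := by
    have := (hf (C ∪ {y}) hAy).symm
    rwa [phiFun, if_pos (by rw [hdAy]; exact htα),
      tokenMove_pair S C y x hxy.symm (hSxy.trans (Finset.pair_comm x y)) hC] at this
  have himg3 : Finset.image f (C' ∪ {x}) = C' ∪ {x} := by
    have := (hf (C' ∪ {x}) hBx).symm
    rwa [phiFun, if_neg (by rw [hdBx]; exact ht'α)] at this
  -- f maps C into C
  have hfC : ∀ v ∈ C, f v ∈ C := by
    intro v hv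
    have h1 : f v ∈ C ∪ {y} := himg1 ▸ Finset.mem_image_of_mem f (by simp [hv])
    have h2 : f v ∈ C ∪ {x} := himg2 ▸ Finset.mem_image_of_mem f (by simp [hv])
    simp only [Finset.mem_union, Finset.mem_singleton] at h1 h2
    rcases h1 with h1 | h1
    · exact h1
    · rcases h2 with h2 | h2
      · exact h1 ▸ h2
      · exact absurd (h2.symm.trans h1) hxy
  have hfCimg : Finset.image f C = C :=
    Finset.eq_of_subset_of_card_le
      (fun w hw => by obtain ⟨v, hv, rfl⟩ := Finset.mem_image.mp hw; exact hfC v hv)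
      (by rw [Finset.card_image_of_injective _ hfinj])
  -- f x = y
  have hfx : f x = y := by
    have h1 : f x ∈ C ∪ {y} := himg1 ▸ Finset.mem_image_of_mem f (by simp)
    simp only [Finset.mem_union, Finset.mem_singleton] at h1
    rcases h1 with h1 | h1
    · rw [← hfCimg] at h1
      obtain ⟨v, hv, hveq⟩ := Finset.mem_image.mp h1
      exact absurd (hfinj hveq ▸ hv) hxC
    · exact h1
  -- but f x ∈ C' ∪ {x}
  have h2 : f x ∈ C' ∪ {x} := himg3 ▸ Finset.mem_image_of_mem f (by simp)
  rw [hfx] at h2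
  simp only [Finset.mem_union, Finset.mem_singleton] at h2
  rcases h2 with h2 | h2
  · exact hyC' h2
  · exact hxy h2.symm
end
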